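/- Let 0 < α < β. Then the supremum over γ ≥ 0 of C_{α,β,γ} equals 2^{1/α − 1/β}, where C_{α,β,γ} = max over ε ∈ [0,1] of C_{α,β,γ}(ε). -/

import Mathlib

open Set

/-- The function `C_{α,β,γ}(ε)` from the paper:
`C_{α,β,γ}(ε) = (ε^{γβ+1}+1)^{1/β} (1+ε)^{1/α} / ((ε^{γα+1}+1)^{1/α} (1+ε)^{1/β})`. -/
noncomputable def Cfun (α β γ ε : ℝ) : ℝ :=
  ((ε ^ (γ * β + 1) + 1) ^ (1 / β) * (1 + ε) ^ (1 / α)) /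
    ((ε ^ (γ * α + 1) + 1) ^ (1 / α) * (1 + ε) ^ (1 / β))

/-- `C_{α,β,γ}`: the maximum of `C_{α,β,γ}(ε)` over `ε ∈ [0,1]`. -/
noncomputable def Cmax (α β γ : ℝ) : ℝ :=
  sSup (Cfun α β γ '' Icc (0 : ℝ) 1)

open Filter Topology in
private lemma Cfun_le_bound (α β γ ε : ℝ) (hα : 0 < α) (hαβ : α < β) (hγ : 0 ≤ γ)
    (hε : ε ∈ Icc (0:ℝ) 1) :
    Cfun α β γ ε ≤ (2:ℝ) ^ (1/α - 1/β) := by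
  obtain ⟨hε0, hε1⟩ := hε
  have hβ : 0 < β := hα.trans hαβ
  have hpow : (0:ℝ) < 1/α - 1/β := by
    have := one_div_lt_one_div_of_lt hα hαβ
    linarith
  unfold Cfun
  rcases eq_or_lt_of_le hε0 with rfl | hε0'
  · simp only [Real.zero_rpow (by positivity : γ * β + 1 ≠ 0),
      Real.zero_rpow (by positivity : γ * α + 1 ≠ 0)]
    norm_num
    exact Real.one_le_rpow (by norm_num) (by rw [← one_div, ← one_div]; exact hpow.le)
  · have h1ε : (0:ℝ) < 1 + ε := by linarith
    have ha1 : (1:ℝ) ≤ ε ^ (γ * α + 1) + 1 := by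
      have : (0:ℝ) ≤ ε ^ (γ * α + 1) := Real.rpow_nonneg hε0 _
      linarith
    have hD : (0:ℝ) < (ε ^ (γ * α + 1) + 1) ^ (1 / α) * (1 + ε) ^ (1 / β) := by
      positivity
    rw [div_le_iff₀ hD]
    have key1 : (ε ^ (γ * β + 1) + 1) ^ (1 / β) ≤ (ε ^ (γ * α + 1) + 1) ^ (1 / α) := by
      calc (ε ^ (γ * β + 1) + 1) ^ (1 / β)
          ≤ (ε ^ (γ * α + 1) + 1) ^ (1 / β) := by
            apply Real.rpow_le_rpow (by positivity) _ (by positivity)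
            have := Real.rpow_le_rpow_of_exponent_ge hε0' hε1
              (by nlinarith : γ * α + 1 ≤ γ * β + 1)
            linarith
        _ ≤ (ε ^ (γ * α + 1) + 1) ^ (1 / α) :=
            Real.rpow_le_rpow_of_exponent_le ha1
              (by have := one_div_lt_one_div_of_lt hα hαβ; linarith)
    calc (ε ^ (γ * β + 1) + 1) ^ (1 / β) * (1 + ε) ^ (1 / α)
        ≤ (ε ^ (γ * α + 1) + 1) ^ (1 / α) * (1 + ε) ^ (1 / α) :=
          mul_le_mul_of_nonneg_right key1 (by positivity)
      _ = (ε ^ (γ * α + 1) + 1) ^ (1 / α) * ((1 + ε) ^ (1/α - 1/β) * (1 + ε) ^ (1 / β)) := by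
          rw [← Real.rpow_add h1ε]; ring_nf
      _ ≤ (ε ^ (γ * α + 1) + 1) ^ (1 / α) * ((2:ℝ) ^ (1/α - 1/β) * (1 + ε) ^ (1 / β)) := by
          apply mul_le_mul_of_nonneg_left _ (by positivity)
          exact mul_le_mul_of_nonneg_right
            (Real.rpow_le_rpow h1ε.le (by linarith) hpow.le) (by positivity)
      _ = (2:ℝ) ^ (1/α - 1/β) * ((ε ^ (γ * α + 1) + 1) ^ (1 / α) * (1 + ε) ^ (1 / β)) := by ring

open Filter Topology in
private lemma Cfun_tendsto (α β ε : ℝ) (hα : 0 < α) (hαβ : α < β) (hε0 : 0 < ε) (hε1 : ε < 1) :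
    Tendsto (fun γ => Cfun α β γ ε) atTop (𝓝 ((1 + ε) ^ (1/α - 1/β))) := by
  have hβ : 0 < β := hα.trans hαβ
  have h1ε : (0:ℝ) < 1 + ε := by linarith
  have hbase : ∀ c : ℝ, 0 < c → Tendsto (fun γ : ℝ => ε ^ (γ * c + 1)) atTop (𝓝 0) := by
    intro c hc
    have := (tendsto_rpow_atTop_of_base_lt_one ε (by linarith) hε1).comp
      (tendsto_atTop_add_const_right atTop 1 (tendsto_id.atTop_mul_const hc))
    simpa [Function.comp_def] using this
  have hcont : ∀ p : ℝ, Tendsto (fun x : ℝ => (x + 1) ^ p) (𝓝 (0:ℝ)) (𝓝 1) := by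
    intro p
    have h1 : Tendsto (fun x : ℝ => x + 1) (𝓝 (0:ℝ)) (𝓝 1) := by
      have := Continuous.tendsto (by continuity : Continuous (fun x : ℝ => x + 1)) 0
      simpa using this
    have h2 : ContinuousAt (fun x : ℝ => x ^ p) 1 :=
      Real.continuousAt_rpow_const 1 p (Or.inl one_ne_zero)
    simpa [Real.one_rpow, Function.comp_def] using h2.tendsto.comp h1
  have hnum : Tendsto (fun γ => (ε ^ (γ * β + 1) + 1) ^ (1/β)) atTop (𝓝 1) :=
    (hcont (1/β)).comp (hbase β hβ)
  have hden : Tendsto (fun γ => (ε ^ (γ * α + 1) + 1) ^ (1/α)) atTop (𝓝 1) :=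
    (hcont (1/α)).comp (hbase α hα)
  have hnum2 : Tendsto (fun γ => (ε ^ (γ * β + 1) + 1) ^ (1/β) * (1 + ε) ^ (1/α))
      atTop (𝓝 (1 * (1 + ε) ^ (1/α))) := hnum.mul tendsto_const_nhds
  have hden2 : Tendsto (fun γ => (ε ^ (γ * α + 1) + 1) ^ (1/α) * (1 + ε) ^ (1/β))
      atTop (𝓝 (1 * (1 + ε) ^ (1/β))) := hden.mul tendsto_const_nhds
  have := hnum2.div hden2 (by positivity : (1:ℝ) * (1 + ε) ^ (1/β) ≠ 0)
  have heq : (1 * (1 + ε) ^ (1/α)) / (1 * (1 + ε) ^ (1/β)) = (1 + ε) ^ (1/α - 1/β) := by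
    rw [one_mul, one_mul, ← Real.rpow_sub h1ε]
  rw [heq] at this
  exact this

open Filter Topology in
/-- For `0 < α < β`, the supremum over `γ ≥ 0` of `C_{α,β,γ}` equals `2^{1/α-1/β}`. -/
theorem sup_Cmax_gamma_nonneg
    (α β : ℝ) (hα : 0 < α) (hαβ : α < β) :
    sSup {c | ∃ γ : ℝ, 0 ≤ γ ∧ c = Cmax α β γ} = (2 : ℝ) ^ (1 / α - 1 / β) := by
  set M : ℝ := (2 : ℝ) ^ (1 / α - 1 / β) with hM
  set S : Set ℝ := {c | ∃ γ : ℝ, 0 ≤ γ ∧ c = Cmax α β γ} with hS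
  have hM0 : 0 ≤ M := Real.rpow_nonneg (by norm_num) _
  have hCmax_le : ∀ γ : ℝ, 0 ≤ γ → Cmax α β γ ≤ M := by
    intro γ hγ
    apply Real.sSup_le _ hM0
    rintro x ⟨ε, hε, rfl⟩
    exact Cfun_le_bound α β γ ε hα hαβ hγ hε
  have hSub : ∀ c ∈ S, c ≤ M := by
    rintro c ⟨γ, hγ, rfl⟩
    exact hCmax_le γ hγ
  have hS_bdd : BddAbove S := ⟨M, hSub⟩
  have hS_ne : S.Nonempty := ⟨Cmax α β 0, 0, le_refl 0, rfl⟩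
  apply le_antisymm
  · exact Real.sSup_le hSub hM0
  · -- lower bound
    have hub : ∀ γ : ℝ, 0 ≤ γ → ∀ ε ∈ Icc (0:ℝ) 1, Cfun α β γ ε ≤ sSup S := by
      intro γ hγ ε hε
      have h1 : Cfun α β γ ε ≤ Cmax α β γ := by
        apply le_csSup
        · exact ⟨M, by rintro x ⟨ε', hε', rfl⟩; exact Cfun_le_bound α β γ ε' hα hαβ hγ hε'⟩
        · exact ⟨ε, hε, rfl⟩
      exact h1.trans (le_csSup hS_bdd ⟨γ, hγ, rfl⟩)
    have hA : ∀ ε ∈ Ioo (0:ℝ) 1, (1 + ε) ^ (1/α - 1/β) ≤ sSup S := by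
      rintro ε ⟨hε0, hε1⟩
      apply le_of_tendsto (Cfun_tendsto α β ε hα hαβ hε0 hε1)
      filter_upwards [eventually_ge_atTop (0:ℝ)] with γ hγ
      exact hub γ hγ ε ⟨hε0.le, hε1.le⟩
    have hlim : Tendsto (fun ε : ℝ => (1 + ε) ^ (1/α - 1/β)) (𝓝[<] (1:ℝ)) (𝓝 M) := by
      have h2 : ContinuousAt (fun x : ℝ => x ^ (1/α - 1/β)) 2 :=
        Real.continuousAt_rpow_const 2 _ (Or.inl two_ne_zero)
      have h1 : Tendsto (fun ε : ℝ => 1 + ε) (𝓝[<] (1:ℝ)) (𝓝 2) := by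
        apply tendsto_nhdsWithin_of_tendsto_nhds
        have := Continuous.tendsto (by continuity : Continuous (fun ε : ℝ => 1 + ε)) 1
        norm_num at this
        exact this
      exact h2.tendsto.comp h1
    apply le_of_tendsto hlim
    filter_upwards [Ioo_mem_nhdsLT_of_mem (by norm_num : (1:ℝ) ∈ Ioc (0:ℝ) 1)] with ε hε
    exact hA ε hε
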